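/- Let {𝒫₁, …, 𝒫ₙ} be a pairwise compatible collection of ΓW-partitions based at m ∈ V^± that is maximal among such collections (no ΓW-partition based at m outside the collection is compatible with all its members), and let Pᵢ be the side of 𝒫ᵢ containing m. If 𝒬 is any other ΓW-partition based at m with Q its side containing m, then the image of φ(Q,m) in Out(A_Γ) lies in the subgroup of Out(A_Γ) generated by the images of φ(P₁,m), …, φ(Pₙ,m). -/

import Mathlib

namespace GW

variable {V : Type*}

/-- `V^±`: the set of generators and their inverses, identified with `V × Bool`;
`(v, true)` is the generator `v` and `(v, false)` is `v⁻¹`. -/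
abbrev Vpm (V : Type*) := V × Bool

/-- The inverse of an element of `V^±`. -/
def pinv (x : Vpm V) : Vpm V := (x.1, !x.2)

/-- The link of a vertex: the set of vertices adjacent to it. -/
def lk (Γ : SimpleGraph V) (v : V) : Set V := {w | Γ.Adj v w}

/-- The star of a vertex: its link together with the vertex itself. -/
def st (Γ : SimpleGraph V) (v : V) : Set V := lk Γ v ∪ {v}

/-- A vertex is principal if no vertex has strictly larger link. -/
def Principal (Γ : SimpleGraph V) (v : V) : Prop := ¬ ∃ w : V, lk Γ v ⊂ lk Γ w

/-- The relation `u ∼ w`: `lk(u) ⊆ st(w)` and `lk(w) ⊆ st(u)`. -/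
def Eqv (Γ : SimpleGraph V) (u w : V) : Prop :=
  lk Γ u ⊆ st Γ w ∧ lk Γ w ⊆ st Γ u

/-- For `S ⊆ V`, the set `S^± ⊆ V^±` of elements with underlying vertex in `S`. -/
def pm (S : Set V) : Set (Vpm V) := {x | x.1 ∈ S}

/-- `u` and `w` lie in the same connected component of `Γ − lk(m)`
(the induced subgraph on the complement of the link of `m`). -/
def SameComp (Γ : SimpleGraph V) (m u w : V) : Prop :=
  ∃ (hu : u ∈ (lk Γ m)ᶜ) (hw : w ∈ (lk Γ m)ᶜ),
    (Γ.induce ((lk Γ m)ᶜ : Set V)).Reachable ⟨u, hu⟩ ⟨w, hw⟩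

/-- The vertex set of the connected component of `u` in `Γ − lk(m)`. -/
def comp (Γ : SimpleGraph V) (m u : V) : Set V := {w | SameComp Γ m u w}

/-- `U ⊆ V^±` is `m`-inseparable if `U = {u}` or `U = {u⁻¹}` for a vertex `u` whose
component in `Γ − lk(m)` is the single vertex `u`, or `U = C^±` for a component `C`
of `Γ − lk(m)` with more than one vertex. -/
def Inseparable (Γ : SimpleGraph V) (m : Vpm V) (U : Set (Vpm V)) : Prop :=
  (∃ u : V, comp Γ m.1 u = {u} ∧ (U = {(u, true)} ∨ U = {(u, false)})) ∨
  (∃ u : V, u ∈ (lk Γ m.1)ᶜ ∧ comp Γ m.1 u ≠ {u} ∧ U = pm (comp Γ m.1 u))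

/-- A `ΓW`-subset based at `m`: a union of `m`-inseparable subsets containing `m`
but not `m⁻¹`. -/
def GWSubset (Γ : SimpleGraph V) (m : Vpm V) (P : Set (Vpm V)) : Prop :=
  m ∈ P ∧ pinv m ∉ P ∧ ∀ x ∈ P, ∃ U : Set (Vpm V), Inseparable Γ m U ∧ x ∈ U ∧ U ⊆ P

/-- `P* = V^± ∖ lk(m)^± ∖ P`. -/
def pstar (Γ : SimpleGraph V) (m : Vpm V) (P : Set (Vpm V)) : Set (Vpm V) :=
  (pm (lk Γ m.1))ᶜ \ P

/-- A `ΓW`-partition `{P | P* | lk(m)^±}` based at `m`, recorded together with its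
base `m` and the side `P` containing `m`; both sides are `ΓW`-subsets with at least
two elements. -/
structure GWPartition (Γ : SimpleGraph V) where
  base : Vpm V
  P : Set (Vpm V)
  hP : GWSubset Γ base P
  hPstar : GWSubset Γ (pinv base) (pstar Γ base P)
  thickP : 2 ≤ P.ncard
  thickPstar : 2 ≤ (pstar Γ base P).ncard

/-- The side `P*` of a `ΓW`-partition. -/
def GWPartition.Pstar {Γ : SimpleGraph V} (Pa : GWPartition Γ) : Set (Vpm V) :=
  pstar Γ Pa.base Pa.P

/-- The (unordered) pair of sides of a `ΓW`-partition; two `ΓW`-partitions are equal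
as partitions exactly when they have the same sides. -/
def sidesOf {Γ : SimpleGraph V} (Pa : GWPartition Γ) : Set (Set (Vpm V)) :=
  {Pa.P, Pa.Pstar}

/-- A `ΓW`-partition splits a vertex `v` if `v` and `v⁻¹` lie in different sides. -/
def Splits {Γ : SimpleGraph V} (Pa : GWPartition Γ) (v : V) : Prop :=
  ((v, true) ∈ Pa.P ∧ (v, false) ∈ Pa.Pstar) ∨
  ((v, false) ∈ Pa.P ∧ (v, true) ∈ Pa.Pstar)

/-- Compatibility of `ΓW`-partitions: some pair of sides is disjoint, or the
underlying vertices of the bases are adjacent with different stars. -/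
def Compatible {Γ : SimpleGraph V} (Pa Qa : GWPartition Γ) : Prop :=
  (Pa.P ∩ Qa.P = ∅ ∨ Pa.P ∩ Qa.Pstar = ∅ ∨ Pa.Pstar ∩ Qa.P = ∅ ∨ Pa.Pstar ∩ Qa.Pstar = ∅) ∨
  (Γ.Adj Pa.base.1 Qa.base.1 ∧ st Γ Pa.base.1 ≠ st Γ Qa.base.1)

/-- Weak compatibility: some pair of sides is disjoint, or the underlying vertices of
the bases are adjacent (hence distinct). -/
def WeakCompatible {Γ : SimpleGraph V} (Pa Qa : GWPartition Γ) : Prop :=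
  (Pa.P ∩ Qa.P = ∅ ∨ Pa.P ∩ Qa.Pstar = ∅ ∨ Pa.Pstar ∩ Qa.P = ∅ ∨ Pa.Pstar ∩ Qa.Pstar = ∅) ∨
  Γ.Adj Pa.base.1 Qa.base.1

/-- A `ΓW`-partition is based at the vertex `u` if it is based at `u` or `u⁻¹`, i.e.
`lk(u)` equals the link of the recorded base and the partition separates `u` from
`u⁻¹`. -/
def BasedAtVtx {Γ : SimpleGraph V} (Pa : GWPartition Γ) (u : V) : Prop :=
  lk Γ u = lk Γ Pa.base.1 ∧ Splits Pa u

/-- `M(U)`: the largest size of a collection of pairwise distinct, pairwise compatible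
`ΓW`-partitions, each based at some element of `U`. -/
noncomputable def M (Γ : SimpleGraph V) (U : Set V) : ℕ :=
  sSup {k : ℕ | ∃ C : Finset (GWPartition Γ), C.card = k ∧
    (∀ Pa ∈ C, Pa.base.1 ∈ U) ∧
    (∀ Pa ∈ C, ∀ Qa ∈ C, Pa ≠ Qa → sidesOf Pa ≠ sidesOf Qa ∧ Compatible Pa Qa)}

/-- `μ(U)`: the largest size of a collection of pairwise distinct, pairwise weakly
compatible `ΓW`-partitions, each based at some element of `U`. -/
noncomputable def Mweak (Γ : SimpleGraph V) (U : Set V) : ℕ :=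
  sSup {k : ℕ | ∃ C : Finset (GWPartition Γ), C.card = k ∧
    (∀ Pa ∈ C, Pa.base.1 ∈ U) ∧
    (∀ Pa ∈ C, ∀ Qa ∈ C, Pa ≠ Qa → sidesOf Pa ≠ sidesOf Qa ∧ WeakCompatible Pa Qa)}

/-- The commutation relations defining the right-angled Artin group `A_Γ`. -/
def Rels (Γ : SimpleGraph V) : Set (FreeGroup V) :=
  {r | ∃ u w : V, Γ.Adj u w ∧
    r = FreeGroup.of u * FreeGroup.of w * (FreeGroup.of u)⁻¹ * (FreeGroup.of w)⁻¹}

/-- The right-angled Artin group `A_Γ`. -/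
abbrev RAAG (Γ : SimpleGraph V) := PresentedGroup (Rels Γ)

/-- The generator of `A_Γ` corresponding to a vertex. -/
def ofv (Γ : SimpleGraph V) (v : V) : RAAG Γ := PresentedGroup.of v

/-- The element of `A_Γ` corresponding to an element of `V^±`. -/
def gen (Γ : SimpleGraph V) (x : Vpm V) : RAAG Γ :=
  if x.2 then ofv Γ x.1 else (ofv Γ x.1)⁻¹

open scoped Classical in
/-- The image of the generator `v` under the Whitehead automorphism `φ(P, m)`. -/
noncomputable def whImage (Γ : SimpleGraph V) (P : Set (Vpm V)) (m : Vpm V) (v : V) :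
    RAAG Γ :=
  if (v, true) ∈ P ∧ (v, false) ∈ P then gen Γ m * ofv Γ v * (gen Γ m)⁻¹
  else if v ≠ m.1 ∧ (v, true) ∈ P ∧ (v, false) ∈ pstar Γ m P then ofv Γ v * (gen Γ m)⁻¹
  else if v ≠ m.1 ∧ (v, false) ∈ P ∧ (v, true) ∈ pstar Γ m P then gen Γ m * ofv Γ v
  else ofv Γ v

/-- `φ` is the Whitehead automorphism `φ(P, m)`: it sends each generator `v` to
`mvm⁻¹` if `v, v⁻¹ ∈ P`; to `vm⁻¹` if `v ∈ P`, `v⁻¹ ∈ P*`, `v ≠ m^{±1}`; to `mv` if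
`v⁻¹ ∈ P`, `v ∈ P*`, `v ≠ m^{±1}`; and to `v` otherwise. -/
def IsWhitehead (Γ : SimpleGraph V) (P : Set (Vpm V)) (m : Vpm V)
    (φ : MulAut (RAAG Γ)) : Prop :=
  ∀ v : V, φ (ofv Γ v) = whImage Γ P m v

/-- An automorphism is inner if it is conjugation by some group element. -/
def IsInner {G : Type*} [Group G] (φ : MulAut G) : Prop :=
  ∃ g : G, ∀ x, φ x = g * x * g⁻¹

/-- Two automorphisms commute as outer automorphisms iff their commutator is inner. -/
def CommuteOuter {G : Type*} [Group G] (φ ψ : MulAut G) : Prop :=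
  IsInner (φ * ψ * φ⁻¹ * ψ⁻¹)

/-- The subgroup of inner automorphisms. -/
def Inn (G : Type*) [Group G] : Subgroup (MulAut G) := (MulAut.conj : G →* MulAut G).range

instance innNormal (G : Type*) [Group G] : (Inn G).Normal := by
  constructor
  intro n hn φ
  obtain ⟨g, rfl⟩ := hn
  refine ⟨φ g, ?_⟩
  ext x
  simp [MulAut.conj, mul_assoc]

/-- The outer automorphism group `Out(G) = Aut(G)/Inn(G)`. -/
abbrev Out (G : Type*) [Group G] := MulAut G ⧸ Inn G

/-- The projection `Aut(G) → Out(G)`. -/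
def toOut (G : Type*) [Group G] : MulAut G →* Out G := QuotientGroup.mk' (Inn G)


section Aux

open scoped Classical

variable {Γ : SimpleGraph V}

lemma pinv_fst (x : Vpm V) : (pinv x).1 = x.1 := rfl

lemma pinv_ne (x : Vpm V) : pinv x ≠ x := by
  simp [pinv, Prod.ext_iff]

lemma pinv_pinv (x : Vpm V) : pinv (pinv x) = x := by
  simp [pinv]

lemma eq_pinv_fst {x m : Vpm V} (h : x = pinv m) : x.1 = m.1 := by rw [h]; rfl

lemma sameComp_refl {m0 u : V} (hu : u ∈ (lk Γ m0)ᶜ) : SameComp Γ m0 u u :=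
  ⟨hu, hu, SimpleGraph.Reachable.refl _⟩

lemma sameComp_symm {m0 u w : V} (h : SameComp Γ m0 u w) : SameComp Γ m0 w u := by
  obtain ⟨hu, hw, hr⟩ := h
  exact ⟨hw, hu, hr.symm⟩

lemma sameComp_trans {m0 u w x : V} (h : SameComp Γ m0 u w) (h' : SameComp Γ m0 w x) :
    SameComp Γ m0 u x := by
  obtain ⟨hu, hw, hr⟩ := h
  obtain ⟨hw', hx, hr'⟩ := h'
  exact ⟨hu, hx, hr.trans hr'⟩

lemma mem_comp_self {m0 u : V} (hu : u ∈ (lk Γ m0)ᶜ) : u ∈ comp Γ m0 u := sameComp_refl hu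

lemma comp_eq_of_mem {m0 u w : V} (h : w ∈ comp Γ m0 u) : comp Γ m0 w = comp Γ m0 u := by
  ext x
  exact ⟨fun hx => sameComp_trans h hx, fun hx => sameComp_trans (sameComp_symm h) hx⟩

lemma base_mem_lk_compl (Γ : SimpleGraph V) (m0 : V) : m0 ∈ (lk Γ m0)ᶜ := by
  simp [lk]

lemma comp_base (Γ : SimpleGraph V) (m0 : V) : comp Γ m0 m0 = {m0} := by
  ext w
  constructor
  · rintro ⟨hu, hw, ⟨p⟩⟩
    cases p with
    | nil => rfl
    | cons h q =>
      rename_i b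
      exact absurd h b.2
  · intro hw
    rw [Set.mem_singleton_iff] at hw
    simpa [hw] using mem_comp_self (base_mem_lk_compl Γ m0)

/-- The inseparable piece containing `x`. -/
noncomputable def piece (Γ : SimpleGraph V) (m0 : V) (x : Vpm V) : Set (Vpm V) :=
  if comp Γ m0 x.1 = {x.1} then {x} else pm (comp Γ m0 x.1)

lemma mem_piece_self {m0 : V} {x : Vpm V} (hx : x.1 ∈ (lk Γ m0)ᶜ) : x ∈ piece Γ m0 x := by
  unfold piece
  split
  · rfl
  · exact mem_comp_self hx

lemma piece_subset_compl {m0 : V} {x : Vpm V} (hx : x.1 ∈ (lk Γ m0)ᶜ) :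
    ∀ y ∈ piece Γ m0 x, y.1 ∈ (lk Γ m0)ᶜ := by
  intro y hy
  unfold piece at hy
  split at hy
  · rw [Set.mem_singleton_iff] at hy; subst hy; exact hx
  · obtain ⟨_, h2, _⟩ := hy; exact h2

lemma piece_eq_of_mem {m0 : V} {x y : Vpm V} (hy : y ∈ piece Γ m0 x) :
    piece Γ m0 y = piece Γ m0 x := by
  unfold piece at hy ⊢
  by_cases h : comp Γ m0 x.1 = {x.1}
  · rw [if_pos h] at hy
    rw [Set.mem_singleton_iff] at hy; subst hy; rfl
  · rw [if_neg h] at hy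
    have hy' : SameComp Γ m0 x.1 y.1 := hy
    have hcy : comp Γ m0 y.1 = comp Γ m0 x.1 := comp_eq_of_mem hy
    have hny : ¬ comp Γ m0 y.1 = {y.1} := by
      intro hc
      have hx1 : x.1 ∈ comp Γ m0 x.1 := by
        obtain ⟨hu, _, _⟩ := hy'; exact mem_comp_self hu
      rw [← hcy, hc, Set.mem_singleton_iff] at hx1
      apply h
      rw [hx1]
      exact hc
    rw [if_neg hny, if_neg h, hcy]

lemma piece_fst_base {m0 : V} (x : Vpm V) (h : x.1 = m0) : piece Γ m0 x = {x} := by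
  unfold piece
  rw [if_pos (by rw [h]; exact comp_base Γ m0)]

lemma insep_eq_piece {m : Vpm V} {U : Set (Vpm V)} {x : Vpm V}
    (h : Inseparable Γ m U) (hx : x ∈ U) : U = piece Γ m.1 x := by
  rcases h with ⟨u, hc, hU | hU⟩ | ⟨u, hu, hc, hU⟩
  · subst hU
    rw [Set.mem_singleton_iff] at hx; subst hx
    unfold piece
    rw [if_pos hc]
  · subst hU
    rw [Set.mem_singleton_iff] at hx; subst hx
    unfold piece
    rw [if_pos hc]
  · subst hU
    have hx' : x.1 ∈ comp Γ m.1 u := hx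
    have h1 : comp Γ m.1 x.1 = comp Γ m.1 u := comp_eq_of_mem hx'
    have h2 : ¬ comp Γ m.1 x.1 = {x.1} := by
      intro he
      have hmem : u ∈ comp Γ m.1 u := mem_comp_self hu
      rw [← h1, he, Set.mem_singleton_iff] at hmem
      rw [h1] at he
      exact hc (by rw [he, hmem])
    unfold piece
    rw [if_neg h2, h1]

lemma insep_fst_compl {m : Vpm V} {U : Set (Vpm V)} {x : Vpm V}
    (h : Inseparable Γ m U) (hx : x ∈ U) : x.1 ∈ (lk Γ m.1)ᶜ := by
  rcases h with ⟨u, hc, hU | hU⟩ | ⟨u, hu, hc, hU⟩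
  · subst hU; rw [Set.mem_singleton_iff] at hx; subst hx
    have : u ∈ comp Γ m.1 u := by rw [hc]; rfl
    obtain ⟨h1, _, _⟩ := this; exact h1
  · subst hU; rw [Set.mem_singleton_iff] at hx; subst hx
    have : u ∈ comp Γ m.1 u := by rw [hc]; rfl
    obtain ⟨h1, _, _⟩ := this; exact h1
  · subst hU
    obtain ⟨_, h2, _⟩ := (hx : SameComp Γ m.1 u x.1)
    exact h2

lemma piece_insep {m : Vpm V} {x : Vpm V} (hx : x.1 ∈ (lk Γ m.1)ᶜ) :
    Inseparable Γ m (piece Γ m.1 x) := by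
  unfold piece
  by_cases h : comp Γ m.1 x.1 = {x.1}
  · rw [if_pos h]
    refine Or.inl ⟨x.1, h, ?_⟩
    obtain ⟨x1, b⟩ := x
    cases b
    · exact Or.inr rfl
    · exact Or.inl rfl
  · rw [if_neg h]
    exact Or.inr ⟨x.1, hx, h, rfl⟩

lemma gw_fst_compl {m : Vpm V} {P : Set (Vpm V)} (h : GWSubset Γ m P) :
    ∀ x ∈ P, x.1 ∈ (lk Γ m.1)ᶜ := by
  intro x hx
  obtain ⟨U, hU, hxU, _⟩ := h.2.2 x hx
  exact insep_fst_compl hU hxU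

lemma gw_sat {m : Vpm V} {P : Set (Vpm V)} (h : GWSubset Γ m P) {x : Vpm V} (hx : x ∈ P) :
    piece Γ m.1 x ⊆ P := by
  obtain ⟨U, hU, hxU, hUP⟩ := h.2.2 x hx
  rw [← insep_eq_piece hU hxU]
  exact hUP

lemma two_le_ncard_of_mem [Finite V] {S : Set (Vpm V)} {a b : Vpm V}
    (ha : a ∈ S) (hb : b ∈ S) (hab : a ≠ b) : 2 ≤ S.ncard := by
  have := (Set.one_lt_ncard_iff (Set.toFinite S)).mpr ⟨a, b, ha, hb, hab⟩
  omega

end Aux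


section Aux2

variable {Γ : SimpleGraph V}

lemma relmk_one {r : FreeGroup V} (hr : r ∈ Rels Γ) :
    (QuotientGroup.mk r : RAAG Γ) = 1 :=
  (QuotientGroup.eq_one_iff r).mpr (Subgroup.subset_normalClosure hr)

lemma commute_ofv {u v : V} (h : Γ.Adj u v) : Commute (ofv Γ u) (ofv Γ v) := by
  have hr : (FreeGroup.of u * FreeGroup.of v * (FreeGroup.of u)⁻¹ * (FreeGroup.of v)⁻¹) ∈
      Rels Γ := ⟨u, v, h, rfl⟩
  have h1 : ofv Γ u * ofv Γ v * (ofv Γ u)⁻¹ * (ofv Γ v)⁻¹ = 1 := by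
    have := relmk_one hr
    rw [show (QuotientGroup.mk (FreeGroup.of u * FreeGroup.of v * (FreeGroup.of u)⁻¹ *
        (FreeGroup.of v)⁻¹) : RAAG Γ) =
        ofv Γ u * ofv Γ v * (ofv Γ u)⁻¹ * (ofv Γ v)⁻¹ from rfl] at this
    exact this
  have h2 : ofv Γ u * ofv Γ v * (ofv Γ u)⁻¹ = ofv Γ v := mul_inv_eq_one.mp h1
  show ofv Γ u * ofv Γ v = ofv Γ v * ofv Γ u
  calc ofv Γ u * ofv Γ v = ofv Γ u * ofv Γ v * (ofv Γ u)⁻¹ * ofv Γ u := by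
        rw [inv_mul_cancel_right]
    _ = ofv Γ v * ofv Γ u := by rw [h2]

lemma commute_gen_ofv_self (Γ : SimpleGraph V) (m : Vpm V) :
    Commute (gen Γ m) (ofv Γ m.1) := by
  unfold gen
  split
  · exact Commute.refl _
  · exact (Commute.refl _).inv_left

lemma commute_gen_adj {m : Vpm V} {v : V} (h : Γ.Adj m.1 v) :
    Commute (gen Γ m) (ofv Γ v) := by
  unfold gen
  split
  · exact commute_ofv h
  · exact (commute_ofv h).inv_left

lemma commute_sandwich {G : Type*} [Group G] {g v : G} (h : Commute g v) (a : ℤ) :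
    g ^ a * v * g ^ (-a) = v := by
  rw [(h.zpow_left a).eq, mul_assoc, ← zpow_add]
  simp

/-- `φ` sends each generator `v` to `m^{x(v⁻¹)} v m^{-x(v)}`. -/
def Good (Γ : SimpleGraph V) (m : Vpm V) (x : Vpm V → ℤ) (φ : MulAut (RAAG Γ)) : Prop :=
  x (m.1, true) = x (m.1, false) ∧
  ∀ v : V, φ (ofv Γ v) = gen Γ m ^ x (v, false) * ofv Γ v * gen Γ m ^ (-x (v, true))

lemma good_congr {m : Vpm V} {x y : Vpm V → ℤ} {φ : MulAut (RAAG Γ)}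
    (h : Good Γ m x φ) (he : ∀ z, x z = y z) : Good Γ m y φ := by
  constructor
  · rw [← he, ← he]; exact h.1
  · intro v
    rw [← he (v, false), ← he (v, true)]
    exact h.2 v

lemma good_fix_base {m : Vpm V} {x : Vpm V → ℤ} {φ : MulAut (RAAG Γ)}
    (h : Good Γ m x φ) : φ (ofv Γ m.1) = ofv Γ m.1 := by
  have h2 := h.2 m.1
  rw [h.1] at h2
  rw [h2, commute_sandwich (commute_gen_ofv_self Γ m) _]

lemma good_fix_gen {m : Vpm V} {x : Vpm V → ℤ} {φ : MulAut (RAAG Γ)}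
    (h : Good Γ m x φ) : φ (gen Γ m) = gen Γ m := by
  unfold gen
  split
  · exact good_fix_base h
  · rw [map_inv, good_fix_base h]

lemma good_one (Γ : SimpleGraph V) (m : Vpm V) : Good Γ m 0 1 := by
  constructor
  · rfl
  · intro v
    show ofv Γ v = gen Γ m ^ (0:ℤ) * ofv Γ v * gen Γ m ^ (-(0:ℤ))
    simp

lemma good_mul {m : Vpm V} {x y : Vpm V → ℤ} {φ ψ : MulAut (RAAG Γ)}
    (hx : Good Γ m x φ) (hy : Good Γ m y ψ) : Good Γ m (x + y) (φ * ψ) := by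
  constructor
  · simp only [Pi.add_apply, hx.1, hy.1]
  · intro v
    have happ : (φ * ψ) (ofv Γ v) = φ (ψ (ofv Γ v)) := rfl
    rw [happ, hy.2 v, map_mul, map_mul, map_zpow, map_zpow, good_fix_gen hx, hx.2 v]
    simp only [Pi.add_apply]
    group

lemma good_inv {m : Vpm V} {x : Vpm V → ℤ} {φ : MulAut (RAAG Γ)}
    (hx : Good Γ m x φ) : Good Γ m (-x) φ⁻¹ := by
  constructor
  · simp only [Pi.neg_apply, hx.1]
  · intro v
    simp only [Pi.neg_apply, neg_neg]
    apply φ.injective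
    rw [show (φ⁻¹ : MulAut (RAAG Γ)) (ofv Γ v) = φ.symm (ofv Γ v) from rfl,
      φ.apply_symm_apply, map_mul, map_mul, map_zpow, map_zpow, good_fix_gen hx, hx.2 v]
    group

lemma good_zpow {m : Vpm V} {x : Vpm V → ℤ} {φ : MulAut (RAAG Γ)}
    (hx : Good Γ m x φ) (k : ℤ) : Good Γ m (k • x) (φ ^ k) := by
  induction k using Int.induction_on with
  | zero =>
    have := good_one Γ m
    rw [show ((0:ℤ) • x) = 0 from zero_smul ℤ x, zpow_zero]
    exact this
  | succ k ih =>
    rw [show ((k:ℤ)+1) • x = (k:ℤ) • x + x from by rw [add_smul, one_smul],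
      zpow_add_one]
    exact good_mul ih hx
  | pred k ih =>
    rw [show (-(k:ℤ)-1) • x = (-(k:ℤ)) • x + (-x) from by rw [sub_smul, one_smul, sub_eq_add_neg],
      zpow_sub_one]
    exact good_mul ih (good_inv hx)

lemma good_list_prod {m : Vpm V} :
    ∀ (l : List ((Vpm V → ℤ) × MulAut (RAAG Γ))),
      (∀ p ∈ l, Good Γ m p.1 p.2) →
      Good Γ m (l.map Prod.fst).sum (l.map Prod.snd).prod := by
  intro l
  induction l with
  | nil => intro _; simpa using good_one Γ m
  | cons p l ih =>
    intro h
    simp only [List.map_cons, List.sum_cons, List.prod_cons]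
    exact good_mul (h p List.mem_cons_self) (ih fun q hq => h q (List.mem_cons_of_mem p hq))

lemma good_conj (Γ : SimpleGraph V) (m : Vpm V) :
    Good Γ m (fun _ => 1) (MulAut.conj (gen Γ m)) := by
  constructor
  · rfl
  · intro v
    show gen Γ m * ofv Γ v * (gen Γ m)⁻¹ = _
    group

lemma mulaut_ext {φ ψ : MulAut (RAAG Γ)} (h : ∀ v, φ (ofv Γ v) = ψ (ofv Γ v)) : φ = ψ := by
  have hhom : (φ : RAAG Γ →* RAAG Γ) = (ψ : RAAG Γ →* RAAG Γ) :=
    PresentedGroup.ext fun v => h v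
  ext z
  exact DFunLike.congr_fun hhom z

lemma toOut_conj {G : Type*} [Group G] (g : G) : toOut G (MulAut.conj g) = 1 :=
  (QuotientGroup.eq_one_iff _).mpr ⟨g, rfl⟩

end Aux2


section Aux3

open scoped Classical

variable {Γ : SimpleGraph V}

/-- The exponent function associated to a `ΓW`-subset. -/
noncomputable def xof (m : Vpm V) (S : Set (Vpm V)) : Vpm V → ℤ :=
  fun z => if z ∈ S ∨ z = pinv m then 1 else 0

lemma good_whitehead {m : Vpm V} {P : Set (Vpm V)} {φ : MulAut (RAAG Γ)}
    (hGW : GWSubset Γ m P) (hφ : IsWhitehead Γ P m φ) :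
    Good Γ m (xof m P) φ := by
  have hcompl : ∀ x ∈ P, ¬ x.1 ∈ lk Γ m.1 := fun x hx => gw_fst_compl hGW x hx
  have hmem : m ∈ P := hGW.1
  have hmem' : pinv m ∉ P := hGW.2.1
  have hxt : xof m P (m.1, true) = 1 ∧ xof m P (m.1, false) = 1 := by
    clear hφ hcompl
    obtain ⟨m1, b⟩ := m
    cases b
    · constructor
      · simp [xof, pinv]
      · simp [xof, pinv, hmem]
    · constructor
      · simp [xof, pinv, hmem]
      · simp [xof, pinv]
  constructor
  · rw [hxt.1, hxt.2]
  · intro v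
    rw [hφ v]
    unfold whImage
    by_cases hv : v = m.1
    · have hc1 : ¬ ((v, true) ∈ P ∧ (v, false) ∈ P) := by
        rintro ⟨h1, h2⟩
        apply hmem'
        clear hφ hcompl hxt hmem
        obtain ⟨m1, b⟩ := m
        subst hv
        cases b
        · exact h1
        · exact h2
      rw [if_neg hc1, if_neg (fun h => h.1 hv), if_neg (fun h => h.1 hv)]
      have hx1 : xof m P (v, false) = 1 := by rw [hv]; exact hxt.2
      have hx2 : xof m P (v, true) = 1 := by rw [hv]; exact hxt.1
      rw [hx1, hx2, hv]
      exact (commute_sandwich (commute_gen_ofv_self Γ m) 1).symm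
    · have hne : ∀ b : Bool, ((v, b) : Vpm V) ≠ pinv m := by
        intro b h
        exact hv (congrArg Prod.fst h)
      by_cases hlk : v ∈ lk Γ m.1
      · have hT : (v, true) ∉ P := fun h => hcompl _ h hlk
        have hF : (v, false) ∉ P := fun h => hcompl _ h hlk
        rw [if_neg (fun h => hT h.1), if_neg (fun h => hT h.2.1), if_neg (fun h => hF h.2.1)]
        unfold xof
        rw [if_neg (by rintro (h | h); exacts [hF h, hne false h]),
          if_neg (by rintro (h | h); exacts [hT h, hne true h])]
        simp
      · by_cases hT : (v, true) ∈ P <;> by_cases hF : (v, false) ∈ P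
        · rw [if_pos ⟨hT, hF⟩]
          unfold xof
          rw [if_pos (Or.inl hF), if_pos (Or.inl hT)]
          simp [zpow_one]
        · rw [if_neg (fun h => hF h.2), if_pos ⟨hv, hT, ⟨hlk, hF⟩⟩]
          unfold xof
          rw [if_neg (by rintro (h | h); exacts [hF h, hne false h]), if_pos (Or.inl hT)]
          simp
        · rw [if_neg (fun h => hT h.1), if_neg (fun h => hT h.2.1),
            if_pos ⟨hv, hF, ⟨hlk, hT⟩⟩]
          unfold xof
          rw [if_pos (Or.inl hF), if_neg (by rintro (h | h); exacts [hT h, hne true h])]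
          simp
        · rw [if_neg (fun h => hT h.1), if_neg (fun h => hT h.2.1), if_neg (fun h => hF h.2.1)]
          unfold xof
          rw [if_neg (by rintro (h | h); exacts [hF h, hne false h]),
            if_neg (by rintro (h | h); exacts [hT h, hne true h])]
          simp

end Aux3


/-- If `{Pa 1, …, Pa n}` is a maximal pairwise compatible collection of
`ΓW`-partitions based at `m` and `Qa` is another `ΓW`-partition based at `m`, then
the image of `φ(Q,m)` in `Out(A_Γ)` lies in the subgroup generated by the images of
the `φ(Pᵢ,m)`. -/
theorem stmt7 {V : Type*} [Fintype V] (Γ : SimpleGraph V) (m : Vpm V) (n : ℕ)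
    (Pa : Fin n → GWPartition Γ) (hbase : ∀ i, (Pa i).base = m)
    (hcomp : ∀ i j, i ≠ j → Compatible (Pa i) (Pa j))
    (hmax : ∀ Ra : GWPartition Γ, Ra.base = m →
      (∀ i, Compatible Ra (Pa i)) → ∃ i, sidesOf Ra = sidesOf (Pa i))
    (Qa : GWPartition Γ) (hQa : Qa.base = m)
    (hother : ∀ i, sidesOf Qa ≠ sidesOf (Pa i))
    (φ : Fin n → MulAut (RAAG Γ)) (hφ : ∀ i, IsWhitehead Γ (Pa i).P m (φ i))
    (ψ : MulAut (RAAG Γ)) (hψ : IsWhitehead Γ Qa.P m ψ) :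
    toOut (RAAG Γ) ψ ∈
      Subgroup.closure (Set.range fun i => toOut (RAAG Γ) (φ i)) := by
  classical
  -- setup
  have hPb : ∀ i, GWSubset Γ m (Pa i).P := fun i => by
    have h := (Pa i).hP; rwa [hbase i] at h
  have hPs : ∀ i, GWSubset Γ (pinv m) (pstar Γ m (Pa i).P) := fun i => by
    have h := (Pa i).hPstar; rwa [hbase i] at h
  have hQb : GWSubset Γ m Qa.P := by have h := Qa.hP; rwa [hQa] at h
  have hPst : ∀ i, (Pa i).Pstar = pstar Γ m (Pa i).P := fun i => by
    unfold GWPartition.Pstar; rw [hbase i]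
  set P : Fin n → Set (Vpm V) := fun i => (Pa i).P with hPdef
  have hmP : ∀ i, m ∈ P i := fun i => (hPb i).1
  have hm'P : ∀ i, pinv m ∉ P i := fun i => (hPb i).2.1
  have hmS : ∀ i, m ∉ pstar Γ m (P i) := fun i => by
    have h := (hPs i).2.1; rwa [pinv_pinv] at h
  have hPcompl : ∀ i, ∀ x ∈ P i, ¬ x.1 ∈ lk Γ m.1 := fun i => gw_fst_compl (hPb i)
  have hQcompl : ∀ x ∈ Qa.P, ¬ x.1 ∈ lk Γ m.1 := gw_fst_compl hQb
  -- pairwise nestedness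
  have hnest : ∀ i j, P i ⊆ P j ∨ P j ⊆ P i := by
    intro i j
    rcases eq_or_ne i j with rfl | hij
    · exact Or.inl subset_rfl
    rcases hcomp i j hij with (h1 | h2 | h3 | h4) | hadj
    · exact absurd h1 (Set.nonempty_iff_ne_empty.mp ⟨m, hmP i, hmP j⟩)
    · rw [hPst j] at h2
      left
      intro x hx
      by_contra hxj
      exact absurd h2 (Set.nonempty_iff_ne_empty.mp ⟨x, hx, ⟨hPcompl i x hx, hxj⟩⟩)
    · rw [hPst i] at h3
      right
      intro x hx
      by_contra hxi
      exact absurd h3 (Set.nonempty_iff_ne_empty.mp ⟨x, ⟨hPcompl j x hx, hxi⟩, hx⟩)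
    · rw [hPst i, hPst j] at h4
      exact absurd h4 (Set.nonempty_iff_ne_empty.mp ⟨pinv m, (hPs i).1, (hPs j).1⟩)
    · rw [hbase i, hbase j] at hadj
      exact absurd hadj.1 Γ.irrefl
  -- representatives with distinct sides
  set I : Finset (Fin n) := Finset.univ.filter (fun i => ∀ j, j < i → P j ≠ P i) with hIdef
  set N : ℕ := I.card with hNdef
  set Lv : Fin n → ℕ := fun i => (I.filter (fun j => P j ⊆ P i)).card with hLvdef
  set Lz : Vpm V → ℕ := fun z => (I.filter (fun j => z ∈ P j)).card with hLzdef
  have hrep : ∀ i, ∃ i', i' ∈ I ∧ P i' = P i := by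
    intro i
    set S : Finset (Fin n) := Finset.univ.filter (fun j => P j = P i) with hSdef
    have hS : S.Nonempty := ⟨i, by simp [hSdef]⟩
    refine ⟨S.min' hS, ?_, ?_⟩
    · refine Finset.mem_filter.mpr ⟨Finset.mem_univ _, ?_⟩
      intro j hj hPj
      have hmin : P (S.min' hS) = P i := (Finset.mem_filter.mp (S.min'_mem hS)).2
      have hjS : j ∈ S := Finset.mem_filter.mpr ⟨Finset.mem_univ _, by rw [hPj, hmin]⟩
      exact absurd (S.min'_le j hjS) (not_le.mpr hj)
    · exact (Finset.mem_filter.mp (S.min'_mem hS)).2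
  have hinj : ∀ i ∈ I, ∀ j ∈ I, P i = P j → i = j := by
    intro i hi j hj hij
    by_contra hne
    rcases lt_or_gt_of_ne hne with h | h
    · exact (Finset.mem_filter.mp hj).2 i h hij
    · exact (Finset.mem_filter.mp hi).2 j h hij.symm
  have hLvle : ∀ i, Lv i ≤ N := fun i => Finset.card_le_card (Finset.filter_subset _ _)
  have hLzle : ∀ z, Lz z ≤ N := fun z => Finset.card_le_card (Finset.filter_subset _ _)
  have hkey : ∀ i ∈ I, ∀ z : Vpm V, z ≠ m → (z ∈ P i ↔ N + 1 ≤ Lz z + Lv i) := by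
    intro i hi z hzm
    constructor
    · intro hz
      have hsub : I.filter (fun j => P i ⊆ P j) ⊆ I.filter (fun j => z ∈ P j) := by
        intro j hj
        rw [Finset.mem_filter] at hj ⊢
        exact ⟨hj.1, hj.2 hz⟩
      have hunion : I.filter (fun j => P j ⊆ P i) ∪ I.filter (fun j => P i ⊆ P j) = I := by
        apply Finset.Subset.antisymm
        · exact Finset.union_subset (Finset.filter_subset _ _) (Finset.filter_subset _ _)
        · intro j hj
          rcases hnest j i with h | h
          · exact Finset.mem_union_left _ (Finset.mem_filter.mpr ⟨hj, h⟩)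
          · exact Finset.mem_union_right _ (Finset.mem_filter.mpr ⟨hj, h⟩)
      have hinter : I.filter (fun j => P j ⊆ P i) ∩ I.filter (fun j => P i ⊆ P j) = {i} := by
        apply Finset.Subset.antisymm
        · intro j hj
          have h1 := Finset.mem_inter.mp hj
          have h2 := Finset.mem_filter.mp h1.1
          have h3 := Finset.mem_filter.mp h1.2
          rw [Finset.mem_singleton]
          exact hinj j h2.1 i hi (Set.Subset.antisymm h2.2 h3.2)
        · intro j hj
          rw [Finset.mem_singleton] at hj
          subst hj
          exact Finset.mem_inter.mpr ⟨Finset.mem_filter.mpr ⟨hi, subset_rfl⟩,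
            Finset.mem_filter.mpr ⟨hi, subset_rfl⟩⟩
      have hcards := Finset.card_union_add_card_inter
        (I.filter (fun j => P j ⊆ P i)) (I.filter (fun j => P i ⊆ P j))
      rw [hunion, hinter, Finset.card_singleton] at hcards
      have hle := Finset.card_le_card hsub
      have hN : N = I.card := rfl
      have hLzz : Lz z = (I.filter (fun j => z ∈ P j)).card := rfl
      have hLvv : Lv i = (I.filter (fun j => P j ⊆ P i)).card := rfl
      omega
    · intro hle
      by_contra hz
      have hsub : I.filter (fun j => z ∈ P j) ⊆ I \ I.filter (fun j => P j ⊆ P i) := by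
        intro j hj
        have hj' := Finset.mem_filter.mp hj
        refine Finset.mem_sdiff.mpr ⟨hj'.1, fun hc => ?_⟩
        exact hz ((Finset.mem_filter.mp hc).2 hj'.2)
      have hcard := Finset.card_le_card hsub
      rw [Finset.card_sdiff_of_subset (Finset.filter_subset _ _)] at hcard
      have := hLvle i
      have hN : N = I.card := rfl
      have hLzz : Lz z = (I.filter (fun j => z ∈ P j)).card := rfl
      have hLvv : Lv i = (I.filter (fun j => P j ⊆ P i)).card := rfl
      omega
  -- the key maximality claim: membership in Qa.P only depends on the level
  have hlevel : ∀ z w : Vpm V, ¬ z.1 ∈ lk Γ m.1 → z.1 ≠ m.1 → ¬ w.1 ∈ lk Γ m.1 →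
      w.1 ≠ m.1 → Lz z = Lz w → z ∈ Qa.P → w ∈ Qa.P := by
    intro z w hzl hzm hwl hwm hLzw hzQ
    by_contra hwQ
    have hzne : z ≠ m := fun h => hzm (congrArg Prod.fst h)
    have hwne : w ≠ m := fun h => hwm (congrArg Prod.fst h)
    have hsame : ∀ i, z ∈ P i ↔ w ∈ P i := by
      intro i
      obtain ⟨i', hi', hPi'⟩ := hrep i
      rw [← hPi', hkey i' hi' z hzne, hkey i' hi' w hwne, hLzw]
    set B : Set (Vpm V) := {x | x ≠ m ∧ ∃ i, z ∉ P i ∧ x ∈ P i} with hBdef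
    set Rs : Set (Vpm V) := {m} ∪ B ∪ piece Γ m.1 z with hRsdef
    have hzpc : z ∈ piece Γ m.1 z := mem_piece_self hzl
    have hmRs : m ∈ Rs := Or.inl (Or.inl rfl)
    have hzRs : z ∈ Rs := Or.inr hzpc
    have hpmB : pinv m ∉ B := fun h => hm'P h.2.choose h.2.choose_spec.2
    have hpinvz : pinv m ∉ piece Γ m.1 z := by
      intro h
      have h2 := piece_eq_of_mem h
      rw [piece_fst_base (m0 := m.1) (pinv m) rfl] at h2
      have h3 : z ∈ ({pinv m} : Set (Vpm V)) := by rw [h2]; exact hzpc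
      rw [Set.mem_singleton_iff] at h3
      exact hzm (eq_pinv_fst h3)
    have hpmRs : pinv m ∉ Rs := by
      rintro ((h | h) | h)
      · exact pinv_ne m h
      · exact hpmB h
      · exact hpinvz h
    have hRscompl : ∀ x ∈ Rs, ¬ x.1 ∈ lk Γ m.1 := by
      rintro x ((h | h) | h)
      · rw [Set.mem_singleton_iff] at h; subst h; exact Γ.irrefl
      · exact hPcompl h.2.choose x h.2.choose_spec.2
      · exact piece_subset_compl hzl x h
    have hpiece_ne_m : ∀ x : Vpm V, x ≠ m → ¬ x.1 ∈ lk Γ m.1 → m ∉ piece Γ m.1 x := by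
      intro x hxm hxl h
      have h2 := piece_eq_of_mem h
      rw [piece_fst_base (m0 := m.1) m rfl] at h2
      have h3 : x ∈ ({m} : Set (Vpm V)) := by rw [h2]; exact mem_piece_self hxl
      rw [Set.mem_singleton_iff] at h3
      exact hxm h3
    have hsatB : ∀ x ∈ B, piece Γ m.1 x ⊆ B := by
      rintro x ⟨hxm, i, hzi, hxi⟩ y hy
      refine ⟨?_, i, hzi, gw_sat (hPb i) hxi hy⟩
      intro hym
      rw [hym] at hy
      exact hpiece_ne_m x hxm (hPcompl i x hxi) hy
    have hGWR : GWSubset Γ m Rs := by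
      refine ⟨hmRs, hpmRs, ?_⟩
      intro x hx
      refine ⟨piece Γ m.1 x, piece_insep (hRscompl x hx), mem_piece_self (hRscompl x hx), ?_⟩
      rcases hx with (hxm | hxB) | hxpz
      · rw [Set.mem_singleton_iff] at hxm
        rw [hxm, piece_fst_base (m0 := m.1) m rfl]
        intro y hy
        rw [Set.mem_singleton_iff] at hy
        rw [hy]
        exact hmRs
      · intro y hy
        exact Or.inl (Or.inr (hsatB x hxB hy))
      · rw [piece_eq_of_mem hxpz]
        intro y hy
        exact Or.inr hy
    have hGWRstar : GWSubset Γ (pinv m) (pstar Γ m Rs) := by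
      refine ⟨⟨Γ.irrefl, hpmRs⟩, ?_, ?_⟩
      · rw [pinv_pinv]
        intro h
        exact h.2 hmRs
      · intro x hx
        obtain ⟨hxl, hxR⟩ := hx
        refine ⟨piece Γ m.1 x, piece_insep hxl, mem_piece_self hxl, ?_⟩
        intro y hy
        refine ⟨piece_subset_compl hxl y hy, ?_⟩
        rintro ((hym | hyB) | hypz)
        · rw [Set.mem_singleton_iff] at hym
          rw [hym] at hy
          refine hpiece_ne_m x (fun h => hxR ?_) hxl hy
          rw [h]
          exact hmRs
        · obtain ⟨hym, i, hzi, hyPi⟩ := hyB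
          have h2 := piece_eq_of_mem hy
          have hxPi : x ∈ P i := by
            have h3 := gw_sat (hPb i) hyPi
            rw [h2] at h3
            exact h3 (mem_piece_self hxl)
          apply hxR
          by_cases hxm : x = m
          · exact Or.inl (Or.inl hxm)
          · exact Or.inl (Or.inr ⟨hxm, i, hzi, hxPi⟩)
        · have h2 := piece_eq_of_mem hy
          have h3 := piece_eq_of_mem hypz
          apply hxR
          apply Or.inr
          rw [← h3, h2]
          exact mem_piece_self hxl
    have hwRs : w ∉ Rs := by
      rintro ((h | h) | h)
      · rw [Set.mem_singleton_iff] at h; exact hwne h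
      · obtain ⟨_, i, hzi, hwi⟩ := h
        exact hzi ((hsame i).mpr hwi)
      · exact hwQ (gw_sat hQb hzQ h)
    have hth1 : 2 ≤ Rs.ncard := two_le_ncard_of_mem hmRs hzRs (fun h => hzm (congrArg Prod.fst h.symm))
    have hth2 : 2 ≤ (pstar Γ m Rs).ncard := by
      refine two_le_ncard_of_mem (a := pinv m) (b := w) ⟨Γ.irrefl, hpmRs⟩ ⟨hwl, hwRs⟩ ?_
      intro h
      exact hwm (eq_pinv_fst h.symm)
    set R : GWPartition Γ := ⟨m, Rs, hGWR, hGWRstar, hth1, hth2⟩ with hRdef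
    have hRcomp : ∀ i, Compatible R (Pa i) := by
      intro i
      left
      by_cases hzi : z ∈ P i
      · right; left
        have hsub : Rs ⊆ P i := by
          rintro x ((hxm | ⟨hxm, j, hzj, hxj⟩) | hxpz)
          · rw [Set.mem_singleton_iff] at hxm; subst hxm; exact hmP i
          · rcases hnest i j with h | h
            · exact absurd (h hzi) hzj
            · exact h hxj
          · exact gw_sat (hPb i) hzi hxpz
        rw [hPst i]
        apply Set.eq_empty_iff_forall_notMem.mpr
        rintro x ⟨hx1, hx2⟩
        exact hx2.2 (hsub hx1)
      · right; right; left
        apply Set.eq_empty_iff_forall_notMem.mpr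
        rintro x ⟨hx1, hx2⟩
        apply hx1.2
        by_cases hxm : x = m
        · exact Or.inl (Or.inl hxm)
        · exact Or.inl (Or.inr ⟨hxm, i, hzi, hx2⟩)
    obtain ⟨i, hsides⟩ := hmax R rfl hRcomp
    have hRsmem : Rs ∈ sidesOf (Pa i) := by
      rw [← hsides]
      exact Set.mem_insert _ _
    rcases Set.mem_insert_iff.mp hRsmem with hRP | hRP
    · by_cases hzi : z ∈ P i
      · refine hwRs ?_
        rw [hRP]
        exact (hsame i).mp hzi
      · refine hzi ?_
        show z ∈ (Pa i).P
        rw [← hRP]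
        exact hzRs
    · rw [Set.mem_singleton_iff, hPst i] at hRP
      have hmnot : m ∉ Rs := by rw [hRP]; exact hmS i
      exact hmnot hmRs
  -- the level function determines Qa.P-membership; define coefficients
  set q : ℕ → ℤ := fun c =>
    if ∃ z : Vpm V, ¬ z.1 ∈ lk Γ m.1 ∧ z.1 ≠ m.1 ∧ Lz z = c ∧ z ∈ Qa.P then 1 else 0 with hqdef
  have hq : ∀ z : Vpm V, ¬ z.1 ∈ lk Γ m.1 → z.1 ≠ m.1 →
      (if z ∈ Qa.P then (1:ℤ) else 0) = q (Lz z) := by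
    intro z hzl hzm
    by_cases hzQ : z ∈ Qa.P
    · rw [if_pos hzQ]
      simp only [hqdef]
      rw [if_pos ⟨z, hzl, hzm, rfl, hzQ⟩]
    · rw [if_neg hzQ]
      simp only [hqdef]
      rw [if_neg ?_]
      rintro ⟨w, hwl, hwm, hLw, hwQ⟩
      exact hzQ (hlevel w z hwl hwm hzl hzm hLw hwQ)
  set kk : Fin n → ℤ := fun i => if i ∈ I then q (N + 1 - Lv i) - q (N - Lv i) else 0 with hkkdef
  set tt : ℤ := q 0 with httdef
  have hLvinj : ∀ i ∈ I, ∀ j ∈ I, Lv i = Lv j → i = j := by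
    intro i hi j hj hLv
    have key : ∀ a ∈ I, ∀ b ∈ I, P a ⊆ P b → Lv a = Lv b → a = b := by
      intro a ha b hb hab hL
      have hsub : I.filter (fun j => P j ⊆ P a) ⊆ I.filter (fun j => P j ⊆ P b) := by
        intro c hc
        rw [Finset.mem_filter] at hc ⊢
        exact ⟨hc.1, hc.2.trans hab⟩
      have heq := Finset.eq_of_subset_of_card_le hsub (le_of_eq hL.symm)
      have hbmem : b ∈ I.filter (fun j => P j ⊆ P b) := Finset.mem_filter.mpr ⟨hb, subset_rfl⟩
      rw [← heq, Finset.mem_filter] at hbmem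
      exact (hinj a ha b hb (Set.Subset.antisymm hab hbmem.2)).symm ▸ rfl
    rcases hnest i j with h | h
    · exact key i hi j hj h hLv
    · exact (key j hj i hi h hLv.symm).symm
  have hsum : ∀ z : Vpm V, ¬ z.1 ∈ lk Γ m.1 → z.1 ≠ m.1 →
      (∑ i, kk i * (if z ∈ P i then (1:ℤ) else 0)) + tt = q (Lz z) := by
    intro z hzl hzm
    have hzm' : z ≠ m := fun h => hzm (congrArg Prod.fst h)
    set Iz : Finset (Fin n) := I.filter (fun j => z ∈ P j) with hIzdef
    have hIzcard : Iz.card = Lz z := rfl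
    have h1 : (∑ i, kk i * (if z ∈ P i then (1:ℤ) else 0))
        = ∑ i ∈ Iz, (q (N + 1 - Lv i) - q (N - Lv i)) := by
      rw [← Finset.sum_subset (Finset.subset_univ Iz) ?hvanish]
      · apply Finset.sum_congr rfl
        intro i hi
        have hi' := Finset.mem_filter.mp hi
        simp only [hkkdef]
        rw [if_pos hi'.1, if_pos hi'.2, mul_one]
      · intro i _ hiIz
        by_cases hiI : i ∈ I
        · have hzP : z ∉ P i := fun hz => hiIz (Finset.mem_filter.mpr ⟨hiI, hz⟩)
          rw [if_neg hzP, mul_zero]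
        · simp only [hkkdef]
          rw [if_neg hiI, zero_mul]
    have hLvinjIz : Set.InjOn Lv Iz := by
      intro a ha b hb hab
      exact hLvinj a (Finset.mem_filter.mp ha).1 b (Finset.mem_filter.mp hb).1 hab
    have himg : Iz.image Lv = Finset.Icc (N + 1 - Lz z) N := by
      apply Finset.eq_of_subset_of_card_le
      · intro c hc
        obtain ⟨i, hiIz, rfl⟩ := Finset.mem_image.mp hc
        have hi' := Finset.mem_filter.mp hiIz
        have hk := (hkey i hi'.1 z hzm').mp hi'.2
        exact Finset.mem_Icc.mpr ⟨by omega, hLvle i⟩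
      · rw [Finset.card_image_of_injOn hLvinjIz, hIzcard, Nat.card_Icc]
        have := hLzle z
        omega
    have h2 : ∑ i ∈ Iz, (q (N + 1 - Lv i) - q (N - Lv i))
        = ∑ c ∈ Finset.Icc (N + 1 - Lz z) N, (q (N + 1 - c) - q (N - c)) := by
      rw [← himg, Finset.sum_image hLvinjIz]
    have h3 : ∑ c ∈ Finset.Icc (N + 1 - Lz z) N, (q (N + 1 - c) - q (N - c))
        = ∑ u ∈ Finset.range (Lz z), (q (u + 1) - q u) := by
      apply Finset.sum_nbij' (fun c => N - c) (fun u => N - u)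
      · intro c hc
        rw [Finset.mem_Icc] at hc
        rw [Finset.mem_range]
        have := hLzle z
        omega
      · intro u hu
        rw [Finset.mem_range] at hu
        rw [Finset.mem_Icc]
        have := hLzle z
        omega
      · intro c hc
        rw [Finset.mem_Icc] at hc
        omega
      · intro u hu
        rw [Finset.mem_range] at hu
        have := hLzle z
        omega
      · intro c hc
        rw [Finset.mem_Icc] at hc
        have h4 : N + 1 - c = (N - c) + 1 := by omega
        rw [h4]
    rw [h1, h2, h3, Finset.sum_range_sub (fun u => q u), httdef]
    ring
  -- assemble the automorphism identity
  set X : Vpm V → ℤ := fun z => (∑ i, kk i * xof m (P i) z) + tt with hXdef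
  set α : MulAut (RAAG Γ) :=
    (List.ofFn (fun i => φ i ^ kk i)).prod * (MulAut.conj (gen Γ m)) ^ tt with hαdef
  have hgoodP : ∀ i, Good Γ m (xof m (P i)) (φ i) := fun i => good_whitehead (hPb i) (hφ i)
  have hgoodQ : Good Γ m (xof m Qa.P) ψ := good_whitehead hQb hψ
  have hgoodlist : Good Γ m (List.ofFn (fun i => kk i • xof m (P i))).sum
      (List.ofFn (fun i => φ i ^ kk i)).prod := by
    have h := good_list_prod (Γ := Γ) (m := m)
      (List.ofFn (fun i => (kk i • xof m (P i), φ i ^ kk i))) ?_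
    · rw [List.map_ofFn, List.map_ofFn] at h
      exact h
    · intro p hp
      rw [List.mem_ofFn] at hp
      obtain ⟨i, rfl⟩ := hp
      exact good_zpow (hgoodP i) (kk i)
  have hgoodα : Good Γ m X α := by
    apply good_congr (good_mul hgoodlist (good_zpow (good_conj Γ m) tt))
    intro z
    simp only [hXdef, Pi.add_apply, Pi.smul_apply, smul_eq_mul, List.sum_ofFn, Finset.sum_apply,
      Pi.one_apply, mul_one]
  have hXval : ∀ z : Vpm V, z.1 ≠ m.1 → ¬ z.1 ∈ lk Γ m.1 → X z = xof m Qa.P z := by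
    intro z hzm hzl
    have hne : z ≠ pinv m := fun h => hzm (eq_pinv_fst h)
    have hXz : X z = (∑ i, kk i * (if z ∈ P i then (1:ℤ) else 0)) + tt := by
      simp only [hXdef]
      congr 1
      apply Finset.sum_congr rfl
      intro i _
      congr 1
      unfold xof
      by_cases h : z ∈ P i
      · rw [if_pos (Or.inl h), if_pos h]
      · rw [if_neg (by rintro (hh | hh); exacts [h hh, hne hh]), if_neg h]
    rw [hXz, hsum z hzl hzm, ← hq z hzl hzm]
    unfold xof
    by_cases h : z ∈ Qa.P
    · rw [if_pos h, if_pos (Or.inl h)]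
    · rw [if_neg h, if_neg (by rintro (hh | hh); exacts [h hh, hne hh])]
  have hψeq : ψ = α := by
    apply mulaut_ext
    intro v
    rw [hgoodQ.2 v, hgoodα.2 v]
    by_cases hv : v = m.1
    · subst hv
      rw [hgoodQ.1, hgoodα.1, commute_sandwich (commute_gen_ofv_self Γ m),
        commute_sandwich (commute_gen_ofv_self Γ m)]
    · by_cases hadj : Γ.Adj m.1 v
      · have hzero : ∀ b : Bool, xof m Qa.P (v, b) = 0 := by
          intro b
          unfold xof
          rw [if_neg ?_]
          rintro (h | h)
          · exact hQcompl _ h hadj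
          · exact hv (eq_pinv_fst h)
        have hXt : ∀ b : Bool, X (v, b) = tt := by
          intro b
          simp only [hXdef]
          have : ∀ i, kk i * xof m (P i) (v, b) = 0 := by
            intro i
            unfold xof
            rw [if_neg ?_, mul_zero]
            rintro (h | h)
            · exact hPcompl i _ h hadj
            · exact hv (eq_pinv_fst h)
          rw [Finset.sum_congr rfl (fun i _ => this i), Finset.sum_const, smul_zero, zero_add]
        rw [hzero true, hzero false, hXt true, hXt false]
        simp only [neg_zero, zpow_zero, one_mul, mul_one]
        exact (commute_sandwich (commute_gen_adj hadj) tt).symm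
      · have hvl : ¬ v ∈ lk Γ m.1 := hadj
        rw [hXval (v, true) hv hvl, hXval (v, false) hv hvl]
  rw [hψeq, hαdef, map_mul, map_zpow, toOut_conj, one_zpow, mul_one, map_list_prod]
  apply Subgroup.list_prod_mem
  intro x hx
  rw [List.map_ofFn, List.mem_ofFn] at hx
  obtain ⟨i, rfl⟩ := hx
  simp only [Function.comp_apply]
  rw [map_zpow]
  exact Subgroup.zpow_mem _ (Subgroup.subset_closure (Set.mem_range_self i)) _


end GW
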